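/- For any two density matrices ρ and σ of dimension 2 (single-qubit states), the squared root-fidelity satisfies (Tr √(√ρ σ √ρ))² = Tr(ρ σ) + 2·√(det ρ · det σ). -/

import Mathlib

open Matrix MeasureTheory
open scoped ComplexOrder Classical

/-- A density matrix of dimension `d`: a complex `d × d` positive semidefinite matrix
of trace 1. -/
def IsDensityMatrix {d : ℕ} (ρ : Matrix (Fin d) (Fin d) ℂ) : Prop :=
  ρ.PosSemidef ∧ ρ.trace = 1

/-- A pure state: a density matrix that is a rank-one orthogonal projection,
i.e. it satisfies `ρ * ρ = ρ` and has rank one. -/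
def IsPureState {d : ℕ} (ρ : Matrix (Fin d) (Fin d) ℂ) : Prop :=
  IsDensityMatrix ρ ∧ ρ * ρ = ρ ∧ ρ.rank = 1

/-- The positive semidefinite square root `√A` of a positive semidefinite matrix,
extended to a total function (junk value `0` on non-PSD matrices). -/
noncomputable def psqrt {d : ℕ} (A : Matrix (Fin d) (Fin d) ℂ) :
    Matrix (Fin d) (Fin d) ℂ :=
  if h : A.PosSemidef then
    h.1.eigenvectorUnitary.1 * diagonal ((↑) ∘ Real.sqrt ∘ h.1.eigenvalues) *
      (star h.1.eigenvectorUnitary : Matrix (Fin d) (Fin d) ℂ) else 0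

lemma psqrt_posSemidef {d : ℕ} {A : Matrix (Fin d) (Fin d) ℂ} (hA : A.PosSemidef) :
    (psqrt A).PosSemidef := by
  rw [psqrt, dif_pos hA]
  have hD : (diagonal ((↑) ∘ Real.sqrt ∘ hA.1.eigenvalues) : Matrix (Fin d) (Fin d) ℂ).PosSemidef :=
    PosSemidef.diagonal (fun i => by simp [Real.sqrt_nonneg])
  have := hD.mul_mul_conjTranspose_same (hA.1.eigenvectorUnitary.1)
  simpa [Matrix.star_eq_conjTranspose] using this

lemma psqrt_mul_self {d : ℕ} {A : Matrix (Fin d) (Fin d) ℂ} (hA : A.PosSemidef) :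
    psqrt A * psqrt A = A := by
  rw [psqrt, dif_pos hA]
  set U := hA.1.eigenvectorUnitary
  have hU : (star U : Matrix (Fin d) (Fin d) ℂ) * U.1 = 1 := Unitary.coe_star_mul_self U
  conv_rhs => rw [hA.1.spectral_theorem, Unitary.conjStarAlgAut_apply]
  calc U.1 * diagonal ((↑) ∘ Real.sqrt ∘ hA.1.eigenvalues) * (star U : Matrix (Fin d) (Fin d) ℂ) *
        (U.1 * diagonal ((↑) ∘ Real.sqrt ∘ hA.1.eigenvalues) * (star U : Matrix (Fin d) (Fin d) ℂ))
      = U.1 * (diagonal ((↑) ∘ Real.sqrt ∘ hA.1.eigenvalues) * ((star U : Matrix (Fin d) (Fin d) ℂ) * U.1) *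
        diagonal ((↑) ∘ Real.sqrt ∘ hA.1.eigenvalues)) * (star U : Matrix (Fin d) (Fin d) ℂ) := by
          simp only [Matrix.mul_assoc]
    _ = _ := by
      rw [hU, Matrix.mul_one, diagonal_mul_diagonal]
      congr 3
      funext i
      simp only [Function.comp_apply]
      rw [← Complex.ofReal_mul, Real.mul_self_sqrt (hA.eigenvalues_nonneg i)]
      rfl

/-- The root fidelity `√F(ρ,σ) = Tr √(√ρ σ √ρ)` (a real number, taken as the real part
of the trace, which is real for density matrices). -/
noncomputable def rootFidelity {d : ℕ} (ρ σ : Matrix (Fin d) (Fin d) ℂ) : ℝ :=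
  ((psqrt (psqrt ρ * σ * psqrt ρ)).trace).re

-- auxiliary lemmas

lemma psd_det_real {d : ℕ} {A : Matrix (Fin d) (Fin d) ℂ} (hA : A.PosSemidef) :
    ∃ r : ℝ, 0 ≤ r ∧ A.det = (r : ℂ) := by
  refine ⟨∏ i, hA.1.eigenvalues i, Finset.prod_nonneg fun i _ => hA.eigenvalues_nonneg i, ?_⟩
  rw [hA.1.det_eq_prod_eigenvalues]
  push_cast
  rfl

lemma herm_trace_im {A : Matrix (Fin 2) (Fin 2) ℂ} (hA : A.IsHermitian) :
    (A.trace).im = 0 := by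
  have h0 : (A 0 0).im = 0 := Complex.conj_eq_iff_im.mp (hA.apply 0 0)
  have h1 : (A 1 1).im = 0 := Complex.conj_eq_iff_im.mp (hA.apply 1 1)
  rw [Matrix.trace_fin_two]
  simp [h0, h1]

theorem cayley2 (S : Matrix (Fin 2) (Fin 2) ℂ) :
    S.trace ^ 2 = (S * S).trace + 2 * S.det := by
  simp [Matrix.trace_fin_two, Matrix.det_fin_two, Matrix.mul_apply, Fin.sum_univ_two]
  ring

/-- Main algebraic lemma for PSD 2×2 matrices. -/
lemma trace_psqrt_sq {A : Matrix (Fin 2) (Fin 2) ℂ} (hA : A.PosSemidef) :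
    ((psqrt A).trace).re ^ 2 = (A.trace).re + 2 * Real.sqrt A.det.re := by
  have hps : psqrt A = psqrt A := rfl
  set S := psqrt A with hS
  have hSpsd : S.PosSemidef := psqrt_posSemidef hA
  have hSS : S * S = A := psqrt_mul_self hA
  obtain ⟨r, hr0, hrdet⟩ := psd_det_real hSpsd
  have hdetA : A.det = ((r ^ 2 : ℝ) : ℂ) := by
    rw [← hSS, Matrix.det_mul, hrdet]; push_cast; ring
  have hdetAre : A.det.re = r ^ 2 := by rw [hdetA, Complex.ofReal_re]
  have hsqrt : Real.sqrt A.det.re = r := by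
    rw [hdetAre, Real.sqrt_sq hr0]
  have hc := cayley2 S
  rw [hSS, hrdet] at hc
  have him : (S.trace).im = 0 := herm_trace_im hSpsd.1
  have hre := congrArg Complex.re hc
  simp only [Complex.mul_re, Complex.add_re, Complex.ofReal_re, Complex.ofReal_im,
    pow_two, Complex.mul_im] at hre
  rw [hps, pow_two, hsqrt]
  norm_num [him] at hre
  linarith

/-- For any two single-qubit density matrices `ρ, σ`, the squared
root-fidelity satisfies `(Tr √(√ρ σ √ρ))² = Tr(ρσ) + 2 √(det ρ · det σ)`. -/
theorem rootFidelity_sq_qubit (ρ σ : Matrix (Fin 2) (Fin 2) ℂ)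
    (hρ : IsDensityMatrix ρ) (hσ : IsDensityMatrix σ) :
    (rootFidelity ρ σ) ^ 2 = ((ρ * σ).trace).re + 2 * Real.sqrt (ρ.det.re * σ.det.re) := by
  have hρp := hρ.1
  have hσp := hσ.1
  have hpsρ : psqrt ρ = psqrt ρ := rfl
  set S := psqrt ρ with hSdef
  have hSpsd : S.PosSemidef := psqrt_posSemidef hρp
  have hSS : S * S = ρ := psqrt_mul_self hρp
  have hSherm : Sᴴ = S := hSpsd.1
  have hMpsd : (S * σ * S).PosSemidef := by
    have := hσp.conjTranspose_mul_mul_same S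
    rwa [hSherm] at this
  have hM : psqrt ρ * σ * psqrt ρ = S * σ * S := by rw [hpsρ]
  -- trace equality
  have htr : (S * σ * S).trace = (ρ * σ).trace := by
    rw [Matrix.trace_mul_cycle, hSS]
  -- determinant
  have hdet : (S * σ * S).det = ρ.det * σ.det := by
    rw [Matrix.det_mul, Matrix.det_mul, ← hSS, Matrix.det_mul]; ring
  obtain ⟨a, ha0, haρ⟩ := psd_det_real hρp
  obtain ⟨b, hb0, hbσ⟩ := psd_det_real hσp
  have hdetre : (S * σ * S).det.re = ρ.det.re * σ.det.re := by
    rw [hdet, haρ, hbσ]; push_cast; simp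
  unfold rootFidelity
  rw [hM, trace_psqrt_sq hMpsd, htr, hdetre]
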